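/- Assume that f(X) is a permutation polynomial over a ring of modulo 2^w and that f satisfies f^2(0) ≡ 2 (mod 4) and f^4(0) ≡ 4 (mod 8). Then for every integer w ≥ 2, f^{2^{w-1}}(0) ≡ 2^{w-1} (mod 2^w). -/

import Mathlib

open Polynomial

/-- `f` is a permutation polynomial over a ring of modulo `2^w`:
for every `w ≥ 0`, the induced map on `ℤ/2^wℤ` is a bijection. -/
def IsPermPoly (f : Polynomial ℤ) : Prop :=
  ∀ w : ℕ, Function.Bijective (fun x : ZMod (2 ^ w) => f.eval₂ (Int.castRingHom (ZMod (2 ^ w))) x)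

/-- `f` is a one-stroke polynomial over a ring of modulo `2^w`:
it is a permutation polynomial and, for every `w ≥ 1` and every point of `ℤ/2^wℤ`,
the orbit `{f^i(X̄) : 0 ≤ i < 2^w}` is all of `ℤ/2^wℤ`. -/
def IsOneStroke (f : Polynomial ℤ) : Prop :=
  IsPermPoly f ∧ ∀ w : ℕ, 1 ≤ w → ∀ x : ℤ, ∀ y : ZMod (2 ^ w),
    ∃ i < 2 ^ w, (((fun t => f.eval t)^[i] x : ℤ) : ZMod (2 ^ w)) = y

namespace Stmt6Aux

variable (f : Polynomial ℤ)

/-- evaluation congruence -/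
lemma evalCong (p : Polynomial ℤ) {n a b : ℤ} (h : a ≡ b [ZMOD n]) :
    p.eval a ≡ p.eval b [ZMOD n] := by
  rw [Int.modEq_iff_dvd] at h ⊢
  exact dvd_trans h (by simpa using Polynomial.sub_dvd_eval_sub b a p)

lemma iterCong {n a b : ℤ} (m : ℕ) (h : a ≡ b [ZMOD n]) :
    (fun t => f.eval t)^[m] a ≡ (fun t => f.eval t)^[m] b [ZMOD n] := by
  induction m with
  | zero => simpa using h
  | succ m ih =>
      rw [Function.iterate_succ_apply', Function.iterate_succ_apply']
      exact evalCong f ih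

lemma injMod (hf : IsPermPoly f) (n : ℕ) {x y : ℤ}
    (h : f.eval x ≡ f.eval y [ZMOD (2 ^ n : ℤ)]) : x ≡ y [ZMOD (2 ^ n : ℤ)] := by
  have hinj := (hf n).injective
  have key : ∀ z : ℤ, (fun x : ZMod (2 ^ n) => f.eval₂ (Int.castRingHom (ZMod (2 ^ n))) x)
      ((z : ZMod (2 ^ n))) = ((f.eval z : ℤ) : ZMod (2 ^ n)) := by
    intro z
    simpa using f.eval₂_at_apply (Int.castRingHom (ZMod (2 ^ n))) z
  have hcast : ((2 ^ n : ℕ) : ℤ) = (2 ^ n : ℤ) := by push_cast; ring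
  have h' : ((f.eval x : ℤ) : ZMod (2 ^ n)) = ((f.eval y : ℤ) : ZMod (2 ^ n)) := by
    rw [ZMod.intCast_eq_intCast_iff, hcast]
    exact h
  have e1 : (fun x : ZMod (2 ^ n) => f.eval₂ (Int.castRingHom (ZMod (2 ^ n))) x) ((x : ZMod (2 ^ n)))
      = (fun x : ZMod (2 ^ n) => f.eval₂ (Int.castRingHom (ZMod (2 ^ n))) x) ((y : ZMod (2 ^ n))) := by
    rw [key x, key y]; exact h'
  have := hinj e1
  rwa [ZMod.intCast_eq_intCast_iff, hcast] at this


/-- helper to build ModEq from an explicit witness -/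
lemma mQ {n a b : ℤ} (w : ℤ) (h : b - a = n * w) : a ≡ b [ZMOD n] :=
  Int.modEq_iff_dvd.mpr ⟨w, h⟩

/-- the derivative is odd everywhere -/
lemma derivOdd (hf : IsPermPoly f) (y : ℤ) : ∃ a, f.derivative.eval y = 2 * a + 1 := by
  rcases Int.even_or_odd (f.derivative.eval y) with ⟨a, ha⟩ | ⟨a, ha⟩
  · exfalso
    obtain ⟨k, hk⟩ := f.binomExpansion y 2
    have h1 : f.eval (y + 2) ≡ f.eval y [ZMOD (2 ^ 2 : ℤ)] :=
      mQ (-(a + k)) (by rw [hk, ha]; ring)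
    have h2 := (injMod f hf 2 h1).dvd
    obtain ⟨c, hc⟩ := h2
    omega
  · exact ⟨a, by omega⟩

/-- the second derivative is even everywhere -/
lemma deriv2Even (x : ℤ) : (2 : ℤ) ∣ (f.derivative.derivative).eval x := by
  rw [Polynomial.eval_eq_sum_range]
  apply Finset.dvd_sum
  intro i _
  have hc : (f.derivative.derivative).coeff i
      = f.coeff (i + 1 + 1) * (↑(i + 1) + 1) * (↑i + 1) := by
    rw [Polynomial.coeff_derivative, Polynomial.coeff_derivative]
  rw [hc]
  have h2 : (2 : ℤ) ∣ (↑(i + 1) + 1) * (↑i + 1) := by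
    rcases Int.even_or_odd (i : ℤ) with ⟨a, ha⟩ | ⟨a, ha⟩
    · exact ⟨(a + 1) * (2 * a + 1), by push_cast; rw [ha]; ring⟩
    · exact ⟨(2 * a + 3) * (a + 1), by push_cast; rw [ha]; ring⟩
  obtain ⟨c, hc2⟩ := h2
  refine ⟨f.coeff (i + 1 + 1) * c * x ^ i, ?_⟩
  linear_combination hc2 * (f.coeff (i + 1 + 1) * x ^ i)

lemma derivAdd2 (y : ℤ) :
    f.derivative.eval (y + 2) ≡ f.derivative.eval y [ZMOD 4] := by
  obtain ⟨k, hk⟩ := f.derivative.binomExpansion y 2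
  obtain ⟨c, hc⟩ := deriv2Even f y
  exact mQ (-(c + k)) (by rw [hk, hc]; ring)

lemma derivPeriodic {y z : ℤ} (h : y ≡ z [ZMOD 2]) :
    f.derivative.eval y ≡ f.derivative.eval z [ZMOD 4] := by
  obtain ⟨s, hs⟩ : (2:ℤ) ∣ z - y := h.dvd
  have hz : z = y + 2 * s := by omega
  rcases Int.even_or_odd s with ⟨a, ha⟩ | ⟨a, ha⟩
  · have : y ≡ z [ZMOD 4] := mQ a (by rw [hz, ha]; ring)
    exact evalCong f.derivative this
  · have h1 : (y + 2) ≡ z [ZMOD 4] := mQ a (by rw [hz, ha]; ring)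
    exact (derivAdd2 f y).symm.trans (evalCong f.derivative h1)

/-- shift lemma: `F (y + 2^(u+1) t) ≡ F y + 2^(u+1) t  [mod 2^(u+2)]`. -/
lemma shift (hf : IsPermPoly f) (u : ℕ) (y t : ℤ) :
    f.eval (y + 2 ^ (u + 1) * t) ≡ f.eval y + 2 ^ (u + 1) * t [ZMOD (2 ^ (u + 2) : ℤ)] := by
  obtain ⟨k, hk⟩ := f.binomExpansion y (2 ^ (u + 1) * t)
  obtain ⟨a, ha⟩ := derivOdd f hf y
  refine mQ (-(a * t + 2 ^ u * k * t ^ 2)) ?_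
  rw [hk, ha]
  ring

lemma shiftIter (hf : IsPermPoly f) (u : ℕ) (m : ℕ) (y t : ℤ) :
    (fun t => f.eval t)^[m] (y + 2 ^ (u + 1) * t)
      ≡ (fun t => f.eval t)^[m] y + 2 ^ (u + 1) * t [ZMOD (2 ^ (u + 2) : ℤ)] := by
  induction m with
  | zero => simp
  | succ m ih =>
      rw [Function.iterate_succ_apply', Function.iterate_succ_apply']
      obtain ⟨s, hs⟩ := ih.dvd
      have harg : (fun t => f.eval t)^[m] (y + 2 ^ (u + 1) * t)
          = (fun t => f.eval t)^[m] y + 2 ^ (u + 1) * (t - 2 * s) := by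
        have e1 : (2:ℤ) ^ (u + 2) = 2 ^ (u + 1) * 2 := by ring
        linear_combination -hs + (t - (t - 2*s)) * e1 / 2 * 0
      rw [harg]
      have h1 := shift f hf u ((fun t => f.eval t)^[m] y) (t - 2 * s)
      exact h1.trans (mQ s (by ring))

lemma shift2 (hf : IsPermPoly f) (y t : ℤ) :
    f.eval (y + 2 * t) ≡ f.eval y + 2 * t [ZMOD 4] := by
  have h := shift f hf 0 y t; norm_num at h; exact h

lemma iter2 (x : ℤ) : (fun t => f.eval t)^[2] x = f.eval (f.eval x) := by
  rw [show (2:ℕ) = 1 + 1 from rfl, Function.iterate_add_apply]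
  simp

/-- F 0 is odd -/
lemma F0odd (hf : IsPermPoly f) (h2 : (fun t => f.eval t)^[2] 0 ≡ 2 [ZMOD 4]) :
    ∃ b, f.eval 0 = 2 * b + 1 := by
  rcases Int.even_or_odd (f.eval 0) with ⟨a, ha⟩ | ⟨a, ha⟩
  · exfalso
    have h1 := shift2 f hf 0 a
    have e : (0:ℤ) + 2 * a = f.eval 0 := by omega
    rw [e] at h1
    have h1' := h1.dvd
    have h2' := h2.dvd
    rw [iter2] at h2'
    obtain ⟨c, hc⟩ := h1'
    obtain ⟨d, hd⟩ := h2'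
    omega
  · exact ⟨a, by omega⟩

lemma parityF (hf : IsPermPoly f) (h2 : (fun t => f.eval t)^[2] 0 ≡ 2 [ZMOD 4]) (y : ℤ) :
    f.eval y ≡ y + 1 [ZMOD 2] := by
  obtain ⟨b, hb⟩ := F0odd f hf h2
  rcases Int.even_or_odd y with ⟨t, ht⟩ | ⟨t, ht⟩
  · have h1 := (shift2 f hf 0 t).dvd
    have e : (0:ℤ) + 2 * t = y := by omega
    rw [e] at h1
    rw [Int.modEq_iff_dvd]
    obtain ⟨c, hc⟩ := h1
    exact ⟨2 * c - b, by omega⟩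
  · have h1 := (shift2 f hf (f.eval 0) (t - b)).dvd
    have e : f.eval 0 + 2 * (t - b) = y := by omega
    rw [e] at h1
    have h2' := h2.dvd
    rw [iter2] at h2'
    rw [Int.modEq_iff_dvd]
    obtain ⟨c, hc⟩ := h1
    obtain ⟨d, hd⟩ := h2'
    exact ⟨b + 2 * c + 2 * d, by omega⟩

/-- product of derivative values along the orbit -/
noncomputable def U : ℕ → ℤ → ℤ
  | 0, _ => 1
  | (m + 1), x => U m x * f.derivative.eval ((fun t => f.eval t)^[m] x)

lemma taylorIter (m : ℕ) (x N : ℤ) :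
    ∃ s, (fun t => f.eval t)^[m] (x + N)
      = (fun t => f.eval t)^[m] x + N * U f m x + N ^ 2 * s := by
  induction m with
  | zero => exact ⟨0, by simp [U]⟩
  | succ m ih =>
      obtain ⟨s, hs⟩ := ih
      obtain ⟨k, hk⟩ :=
        f.binomExpansion ((fun t => f.eval t)^[m] x) (N * U f m x + N ^ 2 * s)
      refine ⟨s * f.derivative.eval ((fun t => f.eval t)^[m] x)
        + k * (U f m x + N * s) ^ 2, ?_⟩
      rw [Function.iterate_succ_apply', Function.iterate_succ_apply', hs,
        show (fun t => f.eval t)^[m] x + N * U f m x + N ^ 2 * s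
          = (fun t => f.eval t)^[m] x + (N * U f m x + N ^ 2 * s) by ring]
      simp only [hk, U]
      ring

lemma Usplit (a b : ℕ) (x : ℤ) :
    U f (a + b) x = U f a x * U f b ((fun t => f.eval t)^[a] x) := by
  induction b with
  | zero => simp [U]
  | succ b ih =>
      have e : a + (b + 1) = (a + b) + 1 := rfl
      rw [e]
      show U f (a + b) x * _ = _
      rw [ih]
      show _ = U f a x * (U f b _ * _)
      rw [show a + b = b + a from Nat.add_comm a b, Function.iterate_add_apply]
      ring

lemma U4 (hf : IsPermPoly f) (h2 : (fun t => f.eval t)^[2] 0 ≡ 2 [ZMOD 4]) (x : ℤ) :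
    U f 4 x ≡ 1 [ZMOD 4] := by
  have e : U f 4 x = (((1 * f.derivative.eval x)
      * f.derivative.eval ((fun t => f.eval t)^[1] x))
      * f.derivative.eval ((fun t => f.eval t)^[2] x))
      * f.derivative.eval ((fun t => f.eval t)^[3] x) := rfl
  have p2 : ∀ z : ℤ, (fun t => f.eval t)^[2] z ≡ z [ZMOD 2] := by
    intro z
    rw [iter2]
    have a1 := (parityF f hf h2 z).dvd
    have a2 := (parityF f hf h2 (f.eval z)).dvd
    rw [Int.modEq_iff_dvd]
    obtain ⟨c, hc⟩ := a1
    obtain ⟨d, hd⟩ := a2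
    exact ⟨c + d - 1, by omega⟩
  have p3 : (fun t => f.eval t)^[3] x = (fun t => f.eval t)^[2] (f.eval x) := by
    rw [show (3:ℕ) = 2 + 1 from rfl, Function.iterate_add_apply]
    simp
  have c1 : f.derivative.eval ((fun t => f.eval t)^[2] x) ≡ f.derivative.eval x [ZMOD 4] :=
    derivPeriodic f (p2 x)
  have c2 : f.derivative.eval ((fun t => f.eval t)^[3] x)
      ≡ f.derivative.eval (f.eval x) [ZMOD 4] := by
    rw [p3]; exact derivPeriodic f (p2 (f.eval x))
  have h1 : (fun t => f.eval t)^[1] x = f.eval x := by simp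
  rw [e, h1]
  obtain ⟨a, ha⟩ := derivOdd f hf x
  obtain ⟨b, hbb⟩ := derivOdd f hf (f.eval x)
  have t1 : ((1 * f.derivative.eval x * f.derivative.eval (f.eval x))
        * f.derivative.eval ((fun t => f.eval t)^[2] x))
        * f.derivative.eval ((fun t => f.eval t)^[3] x)
      ≡ ((1 * f.derivative.eval x * f.derivative.eval (f.eval x))
        * f.derivative.eval x) * f.derivative.eval (f.eval x) [ZMOD 4] :=
    Int.ModEq.mul (Int.ModEq.mul (Int.ModEq.refl _) c1) c2
  refine t1.trans (mQ (-((2 * a * b + a + b) ^ 2 + (2 * a * b + a + b))) ?_)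
  rw [ha, hbb]
  ring

lemma U4k (hf : IsPermPoly f) (h2 : (fun t => f.eval t)^[2] 0 ≡ 2 [ZMOD 4]) :
    ∀ (m : ℕ) (x : ℤ), U f (4 * m) x ≡ 1 [ZMOD 4] := by
  intro m
  induction m with
  | zero => intro x; simp [U]
  | succ m ih =>
      intro x
      rw [show 4 * (m + 1) = 4 * m + 4 by ring, Usplit]
      have := Int.ModEq.mul (ih x) (U4 f hf h2 ((fun t => f.eval t)^[4 * m] x))
      simpa using this

lemma shiftIter2 (hf : IsPermPoly f) (m : ℕ) (y t : ℤ) :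
    (fun t => f.eval t)^[m] (y + 2 * t) ≡ (fun t => f.eval t)^[m] y + 2 * t [ZMOD 4] := by
  have h := shiftIter f hf 0 m y t; norm_num at h; exact h

lemma shift4 (hf : IsPermPoly f) (y t : ℤ) :
    f.eval (y + 4 * t) ≡ f.eval y + 4 * t [ZMOD 8] := by
  have h := shift f hf 1 y t; norm_num at h; exact h

lemma shiftIter4 (hf : IsPermPoly f) (m : ℕ) (y t : ℤ) :
    (fun t => f.eval t)^[m] (y + 4 * t) ≡ (fun t => f.eval t)^[m] y + 4 * t [ZMOD 8] := by
  have h := shiftIter f hf 1 m y t; norm_num at h; exact h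

def Hprop (v : ℕ) : Prop :=
  ∀ x : ℤ, (fun t => f.eval t)^[2 ^ v] x ≡ x + 2 ^ v [ZMOD (2 ^ (v + 1) : ℤ)]

lemma iter22 (x : ℤ) :
    (fun t => f.eval t)^[2] ((fun t => f.eval t)^[2] x) = (fun t => f.eval t)^[4] x := by
  rw [show (4:ℕ) = 2 + 2 from rfl, Function.iterate_add_apply]

lemma iter2F (x : ℤ) :
    (fun t => f.eval t)^[2] (f.eval x) = f.eval ((fun t => f.eval t)^[2] x) := by
  have h1 : (fun t => f.eval t)^[2] (f.eval x) = (fun t => f.eval t)^[3] x := by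
    rw [show (3:ℕ) = 2 + 1 from rfl, Function.iterate_add_apply]
    simp
  have h2 : (fun t => f.eval t)^[3] x = f.eval ((fun t => f.eval t)^[2] x) := by
    rw [show (3:ℕ) = 2 + 1 from rfl]
    rw [Function.iterate_succ_apply']
  rw [h1, h2]

lemma hprop1 (hf : IsPermPoly f) (h2 : (fun t => f.eval t)^[2] 0 ≡ 2 [ZMOD 4]) :
    Hprop f 1 := by
  intro y
  rw [show (2:ℕ)^1 = 2 from rfl, show ((2:ℤ)^1 : ℤ) = 2 by norm_num,
    show ((2:ℤ)^(1+1) : ℤ) = 4 by norm_num]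
  obtain ⟨b, hb⟩ := F0odd f hf h2
  obtain ⟨d, hd⟩ := h2.dvd
  rcases Int.even_or_odd y with ⟨t, ht⟩ | ⟨t, ht⟩
  · have h1 := (shiftIter2 f hf 2 0 t).dvd
    have e : (0:ℤ) + 2 * t = y := by omega
    rw [e] at h1
    obtain ⟨c, hc⟩ := h1
    rw [Int.modEq_iff_dvd]
    exact ⟨c + d, by omega⟩
  · have h1 := (shiftIter2 f hf 2 (f.eval 0) (t - b)).dvd
    have e : f.eval 0 + 2 * (t - b) = y := by omega
    rw [e] at h1
    obtain ⟨c, hc⟩ := h1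
    have heq : (fun t => f.eval t)^[2] (f.eval 0) = f.eval ((fun t => f.eval t)^[2] 0) :=
      iter2F f 0
    have hd2 : f.eval ((fun t => f.eval t)^[2] 0) ≡ f.eval 2 [ZMOD 4] := evalCong f h2
    obtain ⟨d2, hd2'⟩ := hd2.dvd
    have he := (shift2 f hf 0 1).dvd
    rw [show (0:ℤ) + 2 * 1 = 2 by norm_num] at he
    obtain ⟨e3, he3⟩ := he
    rw [Int.modEq_iff_dvd]
    rw [heq] at hc
    exact ⟨e3 + d2 + c, by omega⟩

/-- `D f x = f²(x) - x - 2` -/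
noncomputable def DD (x : ℤ) : ℤ := (fun t => f.eval t)^[2] x - x - 2

/-- `C f x = f(x+2) - f(x) - 2` -/
noncomputable def CC (x : ℤ) : ℤ := f.eval (x + 2) - f.eval x - 2

lemma hD4 (hf : IsPermPoly f) (h2 : (fun t => f.eval t)^[2] 0 ≡ 2 [ZMOD 4]) (x : ℤ) :
    ∃ c, DD f x = 4 * c := by
  have h := hprop1 f hf h2 x
  rw [show (2:ℕ)^1 = 2 from rfl, show ((2:ℤ)^1 : ℤ) = 2 by norm_num,
    show ((2:ℤ)^(1+1) : ℤ) = 4 by norm_num] at h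
  obtain ⟨c, hc⟩ := h.dvd
  exact ⟨-c, by simp only [DD]; omega⟩

lemma hC4 (hf : IsPermPoly f) (x : ℤ) : ∃ c, CC f x = 4 * c := by
  have h := (shift2 f hf x 1).dvd
  rw [show x + 2 * 1 = x + 2 by ring] at h
  obtain ⟨c, hc⟩ := h
  exact ⟨-c, by simp only [CC]; omega⟩

lemma hDshift (hf : IsPermPoly f) (x t : ℤ) : (8:ℤ) ∣ DD f (x + 4 * t) - DD f x := by
  obtain ⟨c, hc⟩ := (shiftIter4 f hf 2 x t).dvd
  exact ⟨-c, by simp only [DD]; omega⟩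

lemma hCsum (hf : IsPermPoly f) (x : ℤ) : (8:ℤ) ∣ CC f x + CC f (x + 2) := by
  obtain ⟨c, hc⟩ := (shift4 f hf x 1).dvd
  refine ⟨-c, ?_⟩
  simp only [CC]
  rw [show x + 2 + 2 = x + 4 * 1 by ring]
  omega

lemma hDrec (hf : IsPermPoly f) (h2 : (fun t => f.eval t)^[2] 0 ≡ 2 [ZMOD 4]) (x : ℤ) :
    (8:ℤ) ∣ DD f (f.eval x) - DD f x - CC f x := by
  obtain ⟨t, ht⟩ := hD4 f hf h2 x
  have he : (fun t => f.eval t)^[2] x = (x + 2) + 4 * t := by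
    simp only [DD] at ht; omega
  have hcomm := iter2F f x
  obtain ⟨c, hc⟩ := (shift4 f hf (x + 2) t).dvd
  refine ⟨-c, ?_⟩
  simp only [DD, CC]
  rw [hcomm, he]
  omega

lemma hSrec (hf : IsPermPoly f) (h2 : (fun t => f.eval t)^[2] 0 ≡ 2 [ZMOD 4]) (x : ℤ) :
    (8:ℤ) ∣ (DD f (f.eval x) + DD f (f.eval x + 2)) - (DD f x + DD f (x + 2)) := by
  obtain ⟨a1, ha1⟩ := hDrec f hf h2 x
  obtain ⟨a2, ha2⟩ := hDrec f hf h2 (x + 2)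
  obtain ⟨cx, hcx⟩ := hC4 f hf x
  have hkey : f.eval (x + 2) = (f.eval x + 2) + 4 * cx := by
    simp only [CC] at hcx; omega
  obtain ⟨a3, ha3⟩ := hDshift f hf (f.eval x + 2) cx
  rw [hkey] at ha2
  obtain ⟨a4, ha4⟩ := hCsum f hf x
  exact ⟨a1 + a2 - a3 + a4, by omega⟩

lemma hSshift (hf : IsPermPoly f) :
    ∀ t x : ℤ, (8:ℤ) ∣ (DD f (x + 2 * t) + DD f (x + 2 * t + 2)) - (DD f x + DD f (x + 2)) := by
  have hS2 : ∀ x : ℤ, (8:ℤ) ∣ (DD f (x + 2) + DD f (x + 2 + 2)) - (DD f x + DD f (x + 2)) := by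
    intro x
    obtain ⟨c, hc⟩ := hDshift f hf x 1
    rw [show x + 4 * 1 = x + 2 + 2 by ring] at hc
    exact ⟨c, by omega⟩
  intro t
  induction t using Int.induction_on with
  | zero => intro x; simp
  | succ k ih =>
      intro x
      obtain ⟨c1, hc1⟩ := ih x
      obtain ⟨c2, hc2⟩ := hS2 (x + 2 * k)
      refine ⟨c1 + c2, ?_⟩
      rw [show x + 2 * ((k:ℤ) + 1) = x + 2 * k + 2 by ring]
      omega
  | pred k ih =>
      intro x
      obtain ⟨c1, hc1⟩ := ih x
      obtain ⟨c2, hc2⟩ := hS2 (x + 2 * (-(k:ℤ) - 1))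
      refine ⟨c1 - c2, ?_⟩
      rw [show x + 2 * (-(k:ℤ) - 1) + 2 = x + 2 * (-(k:ℤ)) by ring] at hc2
      rw [show x + 2 * (-(k:ℤ) - 1) + 2 = x + 2 * (-(k:ℤ)) by ring]
      omega

lemma hS0 (hf : IsPermPoly f) (h2 : (fun t => f.eval t)^[2] 0 ≡ 2 [ZMOD 4])
    (h4 : (fun t => f.eval t)^[4] 0 ≡ 4 [ZMOD 8]) : (8:ℤ) ∣ DD f 0 + DD f 2 := by
  obtain ⟨a, ha⟩ := h4.dvd
  have hiter := iter22 f 0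
  obtain ⟨t, ht⟩ := hD4 f hf h2 0
  have he : (fun t => f.eval t)^[2] (0:ℤ) = 2 + 4 * t := by
    simp only [DD] at ht; omega
  obtain ⟨c, hc⟩ := hDshift f hf 2 t
  refine ⟨-a - c, ?_⟩
  have hsum : DD f 0 + DD f ((fun t => f.eval t)^[2] (0:ℤ))
      = (fun t => f.eval t)^[4] (0:ℤ) - 4 := by
    simp only [DD]
    rw [hiter]
    ring
  rw [he] at hsum
  omega

lemma hSall (hf : IsPermPoly f) (h2 : (fun t => f.eval t)^[2] 0 ≡ 2 [ZMOD 4])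
    (h4 : (fun t => f.eval t)^[4] 0 ≡ 4 [ZMOD 8]) (x : ℤ) :
    (8:ℤ) ∣ DD f x + DD f (x + 2) := by
  obtain ⟨b, hb⟩ := F0odd f hf h2
  obtain ⟨c0, hc0⟩ := hS0 f hf h2 h4
  rcases Int.even_or_odd x with ⟨t, ht⟩ | ⟨t, ht⟩
  · obtain ⟨c, hc⟩ := hSshift f hf t 0
    rw [show (0:ℤ) + 2 * t = x by omega, show (0:ℤ) + 2 = 2 by norm_num] at hc
    exact ⟨c + c0, by omega⟩
  · obtain ⟨c, hc⟩ := hSshift f hf (t - b) (f.eval 0)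
    rw [show f.eval 0 + 2 * (t - b) = x by omega] at hc
    obtain ⟨c1, hc1⟩ := hSrec f hf h2 0
    rw [show (0:ℤ) + 2 = 2 by norm_num] at hc1
    exact ⟨c + c1 + c0, by omega⟩

lemma hprop2 (hf : IsPermPoly f) (h2 : (fun t => f.eval t)^[2] 0 ≡ 2 [ZMOD 4])
    (h4 : (fun t => f.eval t)^[4] 0 ≡ 4 [ZMOD 8]) : Hprop f 2 := by
  intro x
  rw [show (2:ℕ)^2 = 4 from rfl, show ((2:ℤ)^2 : ℤ) = 4 by norm_num,
    show ((2:ℤ)^(2+1) : ℤ) = 8 by norm_num]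
  obtain ⟨t, ht⟩ := hD4 f hf h2 x
  have he : (fun t => f.eval t)^[2] x = (x + 2) + 4 * t := by
    simp only [DD] at ht; omega
  have hiter := iter22 f x
  obtain ⟨c, hc⟩ := hDshift f hf (x + 2) t
  obtain ⟨s, hs⟩ := hSall f hf h2 h4 x
  rw [Int.modEq_iff_dvd]
  have hsum : DD f x + DD f ((fun t => f.eval t)^[2] x)
      = (fun t => f.eval t)^[4] x - x - 4 := by
    simp only [DD]
    rw [hiter]
    ring
  rw [he] at hsum
  exact ⟨-s - c, by omega⟩

lemma hstep (hf : IsPermPoly f) (h2 : (fun t => f.eval t)^[2] 0 ≡ 2 [ZMOD 4])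
    (k : ℕ) (IH : Hprop f (k + 2)) : Hprop f (k + 3) := by
  intro x
  have hsplitn : (2:ℕ) ^ (k + 3) = 2 ^ (k + 2) + 2 ^ (k + 2) := by ring
  rw [hsplitn, Function.iterate_add_apply]
  obtain ⟨c, hc⟩ := (IH x).symm.dvd
  have harg : (fun t => f.eval t)^[2 ^ (k + 2)] x
      = x + 2 ^ (k + 2) + 2 ^ (k + 2 + 1) * c := by linarith
  have hgg : (fun t => f.eval t)^[2 ^ (k + 2)] ((fun t => f.eval t)^[2 ^ (k + 2)] x)
      = (fun t => f.eval t)^[2 ^ (k + 2)] (x + 2 ^ (k + 2) + 2 ^ (k + 2 + 1) * c) := by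
    rw [harg]
  obtain ⟨a, ha⟩ :=
    (shiftIter f hf (k + 2) (2 ^ (k + 2)) (x + (2:ℤ) ^ (k + 2)) c).symm.dvd
  obtain ⟨s, hs⟩ := taylorIter f (2 ^ (k + 2)) x ((2:ℤ) ^ (k + 2))
  have hU := U4k f hf h2 (2 ^ k) x
  rw [show (4 * 2 ^ k : ℕ) = 2 ^ (k + 2) by ring] at hU
  obtain ⟨u, hu⟩ := hU.symm.dvd
  refine mQ (-(c + u + 2 ^ k * s + a)) ?_
  linear_combination (-1 : ℤ) * hgg - ha - hs - hc - (2:ℤ) ^ (k + 2) * hu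

lemma hpropAll (hf : IsPermPoly f) (h2 : (fun t => f.eval t)^[2] 0 ≡ 2 [ZMOD 4])
    (h4 : (fun t => f.eval t)^[4] 0 ≡ 4 [ZMOD 8]) :
    ∀ v : ℕ, 1 ≤ v → Hprop f v := by
  intro v hv
  rcases Nat.lt_or_ge v 2 with h | h
  · have hv1 : v = 1 := by omega
    subst hv1
    exact hprop1 f hf h2
  · refine Nat.le_induction (hprop2 f hf h2 h4) (fun n hn ih => ?_) v h
    obtain ⟨k, rfl⟩ : ∃ k, n = k + 2 := ⟨n - 2, by omega⟩
    exact hstep f hf h2 k ih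

end Stmt6Aux

theorem stmt_6 (f : Polynomial ℤ) (hf : IsPermPoly f)
    (h2 : (fun t => f.eval t)^[2] 0 ≡ 2 [ZMOD 4])
    (h4 : (fun t => f.eval t)^[4] 0 ≡ 4 [ZMOD 8]) :
    ∀ w : ℕ, 2 ≤ w →
      (fun t => f.eval t)^[2 ^ (w - 1)] 0 ≡ 2 ^ (w - 1) [ZMOD 2 ^ w] := by
  intro w hw
  obtain ⟨v, rfl⟩ : ∃ v, w = v + 1 := ⟨w - 1, by omega⟩
  have hv : 1 ≤ v := by omega
  have h0 := Stmt6Aux.hpropAll f hf h2 h4 v hv 0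
  rw [show v + 1 - 1 = v by omega]
  simpa using h0
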